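/- Let (Ω, 𝒫) be a probability space and let ε₁, ε₂ : Ω → ℝ be independent random variables, each with law gaussianReal 0 1. Let α_k, α_{k−1} ∈ ℝ satisfy 0 < α_k ≤ 1 and 0 < α_{k−1} ≤ 1, and fix y ∈ ℝ. Then the random variable ω ↦ √(α_k) · (√(α_{k−1}) · y + √(1 − α_{k−1}) · ε₁(ω)) + √(1 − α_k) · ε₂(ω) has law gaussianReal (√(α_k · α_{k−1}) · y) (1 − α_k · α_{k−1}). That is, composing two steps of the Gaussian forward diffusion collapses into a single Gaussian step with mean √(α_k α_{k−1}) y and variance 1 − α_k α_{k−1}. -/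

import Mathlib

open MeasureTheory ProbabilityTheory Real
open scoped ENNReal NNReal

namespace DDPMAux

lemma pointwise_conv (v w : ℝ≥0) (hv : v ≠ 0) (hw : w ≠ 0) (z x : ℝ) :
    gaussianPDFReal 0 v x * gaussianPDFReal 0 w (z - x)
      = gaussianPDFReal 0 (v + w) z * gaussianPDFReal (v * z / (v + w)) (v * w / (v + w)) x := by
  have hv0 : (0:ℝ) < v := lt_of_le_of_ne v.coe_nonneg (by exact_mod_cast (Ne.symm hv))
  have hw0 : (0:ℝ) < w := lt_of_le_of_ne w.coe_nonneg (by exact_mod_cast (Ne.symm hw))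
  have hvw0 : (0:ℝ) < (v:ℝ) + w := by linarith
  have hu : ((v * w / (v + w) : ℝ≥0) : ℝ) = (v : ℝ) * w / ((v:ℝ) + w) := by push_cast; ring
  unfold gaussianPDFReal
  have hconst : (Real.sqrt (2 * π * v))⁻¹ * (Real.sqrt (2 * π * w))⁻¹
      = (Real.sqrt (2 * π * ((v:ℝ) + w)))⁻¹
        * (Real.sqrt (2 * π * ((v:ℝ) * w / ((v:ℝ) + w))))⁻¹ := by
    rw [← mul_inv, ← mul_inv, ← Real.sqrt_mul (by positivity), ← Real.sqrt_mul (by positivity)]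
    congr 1
    congr 1
    field_simp
  have hexp : -(x - 0) ^ 2 / (2 * v) + -(z - x - 0) ^ 2 / (2 * w)
      = -(z - 0) ^ 2 / (2 * ((v:ℝ) + w))
        + -(x - (v:ℝ) * z / ((v:ℝ) + w)) ^ 2 / (2 * ((v:ℝ) * w / ((v:ℝ) + w))) := by
    field_simp
    ring
  push_cast [hu]
  rw [mul_mul_mul_comm, ← Real.exp_add, hexp, Real.exp_add, hconst, mul_mul_mul_comm]

lemma lintegral_conv (v w : ℝ≥0) (hv : v ≠ 0) (hw : w ≠ 0) (z : ℝ) :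
    ∫⁻ x, gaussianPDF 0 v x * gaussianPDF 0 w (z - x) = gaussianPDF 0 (v + w) z := by
  have hvw0 : (0:ℝ) < (v:ℝ) + w := by
    have : (0:ℝ) < v := lt_of_le_of_ne v.coe_nonneg (by exact_mod_cast (Ne.symm hv))
    have h2 : (0:ℝ) ≤ w := w.coe_nonneg
    linarith
  have hune : (v * w / (v + w) : ℝ≥0) ≠ 0 := by
    have hvwne : v + w ≠ 0 := by simp [hv]
    exact div_ne_zero (mul_ne_zero hv hw) hvwne
  simp only [gaussianPDF]
  have h1 : ∀ x, ENNReal.ofReal (gaussianPDFReal 0 v x)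
      * ENNReal.ofReal (gaussianPDFReal 0 w (z - x))
      = ENNReal.ofReal (gaussianPDFReal 0 (v + w) z)
        * ENNReal.ofReal (gaussianPDFReal ((v:ℝ) * z / ((v:ℝ) + w)) (v * w / (v + w)) x) := by
    intro x
    rw [← ENNReal.ofReal_mul (gaussianPDFReal_nonneg 0 v x),
        ← ENNReal.ofReal_mul (gaussianPDFReal_nonneg 0 (v + w) z)]
    rw [pointwise_conv v w hv hw z x]
  simp_rw [h1]
  rw [lintegral_const_mul' _ _ ENNReal.ofReal_ne_top,
    lintegral_gaussianPDFReal_eq_one _ hune, mul_one]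

lemma gaussian_conv (v w : ℝ≥0) :
    Measure.map (fun p : ℝ × ℝ => p.1 + p.2) ((gaussianReal 0 v).prod (gaussianReal 0 w))
      = gaussianReal 0 (v + w) := by
  by_cases hv : v = 0
  · subst hv
    rw [zero_add, gaussianReal_zero_var, Measure.dirac_prod,
      Measure.map_map (by fun_prop) (by fun_prop)]
    have : ((fun p : ℝ × ℝ => p.1 + p.2) ∘ Prod.mk (0:ℝ)) = id := by
      funext x; simp
    rw [this, Measure.map_id]
  by_cases hw : w = 0
  · subst hw
    rw [add_zero, gaussianReal_zero_var, Measure.prod_dirac,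
      Measure.map_map (by fun_prop) (by fun_prop)]
    have : ((fun p : ℝ × ℝ => p.1 + p.2) ∘ (fun x : ℝ => (x, (0:ℝ)))) = id := by
      funext x; simp
    rw [this, Measure.map_id]
  have hvw : v + w ≠ 0 := by simp [hv]
  have hjm : Measurable (fun p : ℝ × ℝ => gaussianPDF p.1 w p.2) := by
    unfold gaussianPDF gaussianPDFReal
    fun_prop
  ext s hs
  rw [Measure.map_apply (by fun_prop) hs,
    Measure.prod_apply (s := (fun p : ℝ × ℝ => p.1 + p.2) ⁻¹' s) ((measurable_fst.add measurable_snd) hs)]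
  have h2 : ∀ x : ℝ, gaussianReal 0 w (Prod.mk x ⁻¹' ((fun p : ℝ × ℝ => p.1 + p.2) ⁻¹' s))
      = ∫⁻ z in s, gaussianPDF x w z := by
    intro x
    have hpre : (Prod.mk x ⁻¹' ((fun p : ℝ × ℝ => p.1 + p.2) ⁻¹' s))
        = (fun y => x + y) ⁻¹' s := rfl
    rw [hpre, ← Measure.map_apply (measurable_const_add x) hs,
      gaussianReal_map_const_add, zero_add, gaussianReal_apply _ hw]
  simp_rw [h2]
  rw [gaussianReal_of_var_ne_zero _ hv,
    lintegral_withDensity_eq_lintegral_mul _ (measurable_gaussianPDF 0 v)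
      (Measurable.lintegral_prod_right (f := fun x z => gaussianPDF x w z) hjm)]
  have h3 : ∀ x : ℝ, (gaussianPDF 0 v * fun x => ∫⁻ z in s, gaussianPDF x w z) x
      = ∫⁻ z in s, gaussianPDF 0 v x * gaussianPDF x w z := by
    intro x
    simp only [Pi.mul_apply]
    exact (lintegral_const_mul' _ _ (by simp [gaussianPDF])).symm
  simp_rw [h3]
  rw [lintegral_lintegral_swap]
  · have h4 : ∀ z : ℝ, (∫⁻ x, gaussianPDF 0 v x * gaussianPDF x w z)
        = gaussianPDF 0 (v + w) z := by
      intro z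
      rw [← lintegral_conv v w hv hw z]
      refine lintegral_congr fun x => ?_
      congr 1
      unfold gaussianPDF gaussianPDFReal
      rw [sub_zero]
    simp_rw [h4]
    rw [gaussianReal_apply _ hvw s]
  · exact (((measurable_gaussianPDF 0 v).comp measurable_fst).mul hjm).aemeasurable

lemma indep_gaussian_add {Ω : Type*} [MeasurableSpace Ω] (P : Measure Ω)
    [IsProbabilityMeasure P] {X Y : Ω → ℝ} (hX : Measurable X) (hY : Measurable Y)
    {v w : ℝ≥0} (hlX : Measure.map X P = gaussianReal 0 v)
    (hlY : Measure.map Y P = gaussianReal 0 w) (hindep : IndepFun X Y P) :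
    Measure.map (fun ω => X ω + Y ω) P = gaussianReal 0 (v + w) := by
  have hjoint : Measure.map (fun ω => (X ω, Y ω)) P
      = (gaussianReal 0 v).prod (gaussianReal 0 w) := by
    rw [← hlX, ← hlY]
    exact (indepFun_iff_map_prod_eq_prod_map_map hX.aemeasurable hY.aemeasurable).1 hindep
  have hc : (fun ω => X ω + Y ω)
      = (fun p : ℝ × ℝ => p.1 + p.2) ∘ (fun ω => (X ω, Y ω)) := rfl
  rw [hc, ← Measure.map_map (by fun_prop) (hX.prodMk hY), hjoint, gaussian_conv]

end DDPMAux

open DDPMAux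

/-- **Two Gaussian forward-diffusion steps collapse into one.**
If `ε₁, ε₂` are independent standard real Gaussians, `0 < α_k ≤ 1`, `0 < α_{k−1} ≤ 1`,
then `√(α_k)·(√(α_{k−1})·y + √(1 − α_{k−1})·ε₁) + √(1 − α_k)·ε₂` has law
`gaussianReal (√(α_k·α_{k−1})·y) (1 − α_k·α_{k−1})`. -/
theorem ddpm_two_step_collapse {Ω : Type*} [MeasurableSpace Ω]
    (P : Measure Ω) [IsProbabilityMeasure P]
    (ε₁ ε₂ : Ω → ℝ) (h₁ : Measurable ε₁) (h₂ : Measurable ε₂)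
    (hlaw₁ : Measure.map ε₁ P = gaussianReal 0 1)
    (hlaw₂ : Measure.map ε₂ P = gaussianReal 0 1)
    (hindep : IndepFun ε₁ ε₂ P)
    (αk αk' : ℝ) (hαk : 0 < αk ∧ αk ≤ 1) (hαk' : 0 < αk' ∧ αk' ≤ 1)
    (y : ℝ) :
    Measure.map
      (fun ω => Real.sqrt αk * (Real.sqrt αk' * y + Real.sqrt (1 - αk') * ε₁ ω) +
        Real.sqrt (1 - αk) * ε₂ ω) P =
    gaussianReal (Real.sqrt (αk * αk') * y) (Real.toNNReal (1 - αk * αk')) := by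
  obtain ⟨hk0, hk1⟩ := hαk
  obtain ⟨hk'0, hk'1⟩ := hαk'
  set a : ℝ := Real.sqrt αk * Real.sqrt (1 - αk') with ha
  set b : ℝ := Real.sqrt (1 - αk) with hb
  set c : ℝ := Real.sqrt (αk * αk') * y with hc
  have hlawa : Measure.map (fun ω => a * ε₁ ω) P
      = gaussianReal 0 (⟨a ^ 2, sq_nonneg a⟩ * 1) := by
    have hcomp : (fun ω => a * ε₁ ω) = (fun x : ℝ => a * x) ∘ ε₁ := rfl
    rw [hcomp, ← Measure.map_map (measurable_const_mul a) h₁, hlaw₁,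
      gaussianReal_map_const_mul, mul_zero]
    rfl
  have hlawb : Measure.map (fun ω => b * ε₂ ω) P
      = gaussianReal 0 (⟨b ^ 2, sq_nonneg b⟩ * 1) := by
    have hcomp : (fun ω => b * ε₂ ω) = (fun x : ℝ => b * x) ∘ ε₂ := rfl
    rw [hcomp, ← Measure.map_map (measurable_const_mul b) h₂, hlaw₂,
      gaussianReal_map_const_mul, mul_zero]
    rfl
  have hindep' : IndepFun (fun ω => a * ε₁ ω) (fun ω => b * ε₂ ω) P :=
    hindep.comp (measurable_const_mul a) (measurable_const_mul b)
  have hsum := indep_gaussian_add P (X := fun ω => a * ε₁ ω) (Y := fun ω => b * ε₂ ω) (measurable_const.mul h₁) (measurable_const.mul h₂)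
    hlawa hlawb hindep'
  have hvar : (⟨a ^ 2, sq_nonneg a⟩ * 1 + ⟨b ^ 2, sq_nonneg b⟩ * 1 : ℝ≥0)
      = Real.toNNReal (1 - αk * αk') := by
    have ha2 : a ^ 2 = αk * (1 - αk') := by
      rw [ha, mul_pow, Real.sq_sqrt hk0.le, Real.sq_sqrt (by linarith)]
    have hb2 : b ^ 2 = 1 - αk := by
      rw [hb, Real.sq_sqrt (by linarith)]
    have hnn : (0:ℝ) ≤ 1 - αk * αk' := by nlinarith
    apply NNReal.coe_injective
    rw [Real.coe_toNNReal _ hnn]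
    push_cast
    show a ^ 2 * 1 + b ^ 2 * 1 = 1 - αk * αk'
    rw [ha2, hb2]
    ring
  rw [hvar] at hsum
  have hfun : (fun ω => Real.sqrt αk * (Real.sqrt αk' * y + Real.sqrt (1 - αk') * ε₁ ω) +
        Real.sqrt (1 - αk) * ε₂ ω)
      = fun ω => (a * ε₁ ω + b * ε₂ ω) + c := by
    have hc' : Real.sqrt (αk * αk') = Real.sqrt αk * Real.sqrt αk' :=
      Real.sqrt_mul hk0.le _
    funext ω
    rw [hc, hb, ha, hc']
    ring
  rw [hfun]
  have hcomp : (fun ω => a * ε₁ ω + b * ε₂ ω + c)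
      = (fun x : ℝ => x + c) ∘ (fun ω => a * ε₁ ω + b * ε₂ ω) := rfl
  rw [hcomp, ← Measure.map_map (measurable_add_const c) (f := fun ω => a * ε₁ ω + b * ε₂ ω)
      ((measurable_const.mul h₁).add (measurable_const.mul h₂)), hsum,
    gaussianReal_map_add_const c, zero_add]
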